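/- Let V be a finite-dimensional real vector space and W a finite-dimensional linear subspace of the space of symmetric bilinear forms on V. For every n ≥ 1, the set of W-independent n-tuples is an open subset of V^n (in the product topology). -/

import Mathlib

open Module

/-- `φ(span(vs) ⊗ W)`: the subspace of `V* = V →ₗ[ℝ] ℝ` spanned by the functionals
`w(v, −)` for `w ∈ W` and `v ∈ span(s)`. -/
noncomputable def phiSpan {V : Type*} [AddCommGroup V] [Module ℝ V]
    (W : Submodule ℝ (V →ₗ[ℝ] V →ₗ[ℝ] ℝ)) (s : Set V) : Submodule ℝ (V →ₗ[ℝ] ℝ) :=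
  Submodule.span ℝ {f | ∃ w ∈ W, ∃ v ∈ Submodule.span ℝ s, f = w v}

/-- A tuple `(v₁, …, vₙ)` is `W`-independent if `φ(span(v₁,…,vₙ) ⊗ W) ⊆ V*` has
dimension `n · dim W`. -/
def WIndep {V : Type*} [AddCommGroup V] [Module ℝ V]
    (W : Submodule ℝ (V →ₗ[ℝ] V →ₗ[ℝ] ℝ)) {n : ℕ} (vs : Fin n → V) : Prop :=
  finrank ℝ (phiSpan W (Set.range vs)) = n * finrank ℝ W

theorem WIndep_isOpen
    {V : Type*} [NormedAddCommGroup V] [NormedSpace ℝ V] [FiniteDimensional ℝ V]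
    (W : Submodule ℝ (V →ₗ[ℝ] V →ₗ[ℝ] ℝ))
    (hsymm : ∀ w ∈ W, ∀ u v : V, w u v = w v u)
    [Module.Finite ℝ W]
    (n : ℕ) (hn : 1 ≤ n) :
    IsOpen {vs : Fin n → V | WIndep W vs} := by
  classical
  haveI : Module.Free ℝ W :=
    @Module.Free.of_divisionRing ℝ W _ (@Submodule.addCommGroup ℝ _ Real.instRing LinearMap.addCommGroup _ W) W.module
  let m := finrank ℝ W
  let b : Basis (Fin m) ℝ W := finBasis ℝ W
  -- the family of functionals
  let g : (Fin n → V) → (Fin n × Fin m) → (V →ₗ[ℝ] ℝ) :=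
    fun vs p => ((b p.2 : W) : V →ₗ[ℝ] V →ₗ[ℝ] ℝ) (vs p.1)
  have key : ∀ vs : Fin n → V,
      phiSpan W (Set.range vs) = Submodule.span ℝ (Set.range (g vs)) := by
    intro vs
    apply le_antisymm
    · rw [phiSpan, Submodule.span_le]
      rintro f ⟨w, hw, v, hv, rfl⟩
      -- write w in terms of the basis
      have hwrep : ((∑ j, (b.repr ⟨w, hw⟩) j • b j : W) : V →ₗ[ℝ] V →ₗ[ℝ] ℝ) = w := by
        rw [b.sum_repr ⟨w, hw⟩]
      rw [Submodule.mem_span_range_iff_exists_fun ℝ] at hv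
      obtain ⟨c, hc⟩ := hv
      have : w v = ∑ j, ∑ i, ((b.repr ⟨w, hw⟩) j * c i) • g vs (i, j) := by
        conv_lhs => rw [← hwrep, ← hc]
        simp only [Submodule.coe_sum, SetLike.val_smul, LinearMap.sum_apply,
          LinearMap.smul_apply, map_sum, map_smul, Finset.smul_sum, smul_smul]
        rw [Finset.sum_comm]
        simp [g, mul_comm]
      rw [this]
      exact Submodule.sum_mem _ fun j _ => Submodule.sum_mem _ fun i _ =>
        Submodule.smul_mem _ _ (Submodule.subset_span ⟨(i, j), rfl⟩)
    · rw [Submodule.span_le]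
      rintro f ⟨p, rfl⟩
      exact Submodule.subset_span ⟨(b p.2 : V →ₗ[ℝ] V →ₗ[ℝ] ℝ), (b p.2).2, vs p.1,
        Submodule.subset_span ⟨p.1, rfl⟩, rfl⟩
  have hiff : ∀ vs : Fin n → V, WIndep W vs ↔ LinearIndependent ℝ (g vs) := by
    intro vs
    rw [WIndep, key, linearIndependent_iff_card_eq_finrank_span, Set.finrank,
      Fintype.card_prod, Fintype.card_fin, Fintype.card_fin, eq_comm]
  -- transport to continuous linear maps, a normed space
  let e : (V →ₗ[ℝ] ℝ) ≃ₗ[ℝ] (V →L[ℝ] ℝ) := LinearMap.toContinuousLinearMap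
  let G : (Fin n → V) → (Fin n × Fin m) → (V →L[ℝ] ℝ) := fun vs p => e (g vs p)
  have hset : {vs : Fin n → V | WIndep W vs}
      = G ⁻¹' {f : (Fin n × Fin m) → (V →L[ℝ] ℝ) | LinearIndependent ℝ f} := by
    ext vs
    simp only [Set.mem_setOf_eq, Set.mem_preimage, hiff]
    constructor
    · intro h
      exact h.map' e.toLinearMap e.ker
    · intro h
      have := h.map' e.symm.toLinearMap e.symm.ker
      have h2 : (⇑(e.symm.toLinearMap) ∘ G vs) = g vs := funext fun p => e.symm_apply_apply _
      rw [h2] at this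
      exact this
  rw [hset]
  refine (isOpen_setOf_linearIndependent).preimage ?_
  refine continuous_pi fun p => ?_
  exact (LinearMap.continuous_of_finiteDimensional
    (e.toLinearMap ∘ₗ ((b p.2 : W) : V →ₗ[ℝ] V →ₗ[ℝ] ℝ))).comp (continuous_apply p.1)
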